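/- Properties of the modified-energy symbol: for n ≥ 1, the trigonometric polynomial f_n(ω) = 1 − cos(ω) Σ_{k=0}^{n−1} (C(2k,k)/4^k)(sin ω)^{2k} satisfies: (i) f_n is even and f_n − 1 is odd about π/2 (i.e. x ↦ f_n(x − π/2) − f_n(π/2) is odd with f_n(π/2) = 1); (ii) f_n(ω) ~ (C(2n,n)/4^n) ω^{2n} as ω → 0; (iii) there exists α > 0 such that α ω^{2n} ≤ f_n(ω) ≤ α^{−1} ω^{2n} for all ω ∈ (−π, π). -/

import Mathlib

open scoped Topology

noncomputable def modSymbol (n : ℕ) (ω : ℝ) : ℝ :=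
  1 - Real.cos ω * ∑ k ∈ Finset.range n, ((Nat.choose (2 * k) k : ℝ) / 4 ^ k) * Real.sin ω ^ (2 * k)

section Aux
open Polynomial Finset Real Filter Set


lemma descP_smeval_succ (r : ℚ) (k : ℕ) :
    (descPochhammer ℤ (k+1)).smeval r = (descPochhammer ℤ k).smeval r * (r - k) := by
  rw [descPochhammer_succ_right, smeval_mul, smeval_sub, smeval_X, smeval_natCast]
  ring

lemma rchoose_succ (r : ℚ) (k : ℕ) :
    Ring.choose r (k+1) = Ring.choose r k * (r - k) / (k+1) := by
  have h1 := Ring.descPochhammer_eq_factorial_smul_choose r (k+1)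
  have h2 := Ring.descPochhammer_eq_factorial_smul_choose r k
  rw [descP_smeval_succ, h2] at h1
  have hk : ((k+1).factorial : ℚ) = (k+1) * k.factorial := by
    rw [Nat.factorial_succ]; push_cast; ring
  rw [nsmul_eq_mul, nsmul_eq_mul, hk] at h1
  have hkf : (k.factorial : ℚ) ≠ 0 := by exact_mod_cast k.factorial_ne_zero
  have hk1 : ((k:ℚ)+1) ≠ 0 := by positivity
  have h3 : Ring.choose r k * (r - k) = (k+1) * Ring.choose r (k+1) :=
    mul_left_cancel₀ hkf (by linear_combination h1)
  field_simp
  linear_combination -h3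

lemma rchoose_neg_one (k : ℕ) : Ring.choose (-1 : ℚ) k = (-1)^k := by
  induction k with
  | zero => simp [Ring.choose_zero_right]
  | succ k ih =>
      rw [rchoose_succ, ih]
      have hk1 : ((k:ℚ)+1) ≠ 0 := by positivity
      field_simp
      ring

lemma rchoose_neg_half (k : ℕ) :
    Ring.choose (-(1/2) : ℚ) k = (-1)^k * ((2*k).choose k) / 4^k := by
  induction k with
  | zero => simp [Ring.choose_zero_right]
  | succ k ih =>
      rw [rchoose_succ, ih]
      have hk1 : ((k:ℚ)+1) ≠ 0 := by positivity
      have hC0 : ((k+1) * (2*(k+1)).choose (k+1) : ℚ) = 2*(2*k+1) * ((2*k).choose k) := by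
        exact_mod_cast congrArg (Nat.cast : ℕ → ℚ) (Nat.succ_mul_centralBinom_succ k)
      have hC : ((2*(k+1)).choose (k+1) : ℚ) = 2*(2*k+1) * ((2*k).choose k) / (k+1) := by
        field_simp
        linear_combination hC0
      rw [hC]
      have h4 : (4:ℚ)^k ≠ 0 := by positivity
      field_simp
      ring

lemma conv_identity (m : ℕ) :
    ∑ ij ∈ Finset.HasAntidiagonal.antidiagonal m,
      (((2*ij.1).choose ij.1 : ℝ) / 4^ij.1) * (((2*ij.2).choose ij.2 : ℝ) / 4^ij.2) = 1 := by
  have key := Ring.add_choose_eq (r := (-(1/2) : ℚ)) (s := (-(1/2) : ℚ)) m (Commute.all _ _)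
  have hsum : (-(1/2) : ℚ) + (-(1/2)) = -1 := by norm_num
  rw [hsum, rchoose_neg_one] at key
  simp only [rchoose_neg_half] at key
  have hrw : ∀ ij ∈ Finset.HasAntidiagonal.antidiagonal m,
      ((-1:ℚ))^ij.1 * ((2*ij.1).choose ij.1) / 4^ij.1 *
        ((-1:ℚ)^ij.2 * ((2*ij.2).choose ij.2) / 4^ij.2)
      = (-1)^m * ((((2*ij.1).choose ij.1 : ℚ) / 4^ij.1) *
          (((2*ij.2).choose ij.2 : ℚ) / 4^ij.2)) := by
    intro ij hij
    have h : ij.1 + ij.2 = m := Finset.HasAntidiagonal.mem_antidiagonal.mp hij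
    rw [← h, pow_add]
    ring
  rw [Finset.sum_congr rfl hrw, ← Finset.mul_sum] at key
  have hm : ((-1:ℚ))^m ≠ 0 := pow_ne_zero _ (by norm_num)
  have key2 : ∑ ij ∈ Finset.HasAntidiagonal.antidiagonal m,
      (((2*ij.1).choose ij.1 : ℚ) / 4^ij.1) * (((2*ij.2).choose ij.2 : ℚ) / 4^ij.2) = 1 :=
    (mul_left_cancel₀ hm ((mul_one _).trans key)).symm
  have := congrArg (Rat.cast : ℚ → ℝ) key2
  push_cast at this
  convert this using 2

noncomputable def aa (k : ℕ) : ℝ := ((2*k).choose k : ℝ) / 4^k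

lemma aa_pos (k : ℕ) : 0 < aa k := by
  have : 0 < (2*k).choose k := Nat.choose_pos (by omega)
  unfold aa; positivity

lemma aa_le_one (k : ℕ) : aa k ≤ 1 := by
  have h : ((2*k).choose k : ℝ) ≤ 4^k := by
    have h1 : (2*k).choose k ≤ 2^(2*k) := by
      calc (2*k).choose k ≤ ∑ m ∈ range (2*k+1), (2*k).choose m :=
            Finset.single_le_sum (fun i _ => Nat.zero_le _) (by simp; omega)
        _ = 2^(2*k) := Nat.sum_range_choose (2*k)
    calc ((2*k).choose k : ℝ) ≤ (2:ℝ)^(2*k) := by exact_mod_cast h1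
      _ = 4^k := by rw [pow_mul]; norm_num
  have h4 : (0:ℝ) < 4^k := by positivity
  rw [aa, div_le_one h4]; exact h

lemma aa_succ_le (k : ℕ) : aa (k+1) ≤ aa k := by
  have hC : ((k:ℝ)+1) * ((2*(k+1)).choose (k+1)) = 2*(2*k+1) * ((2*k).choose k) := by
    exact_mod_cast congrArg (Nat.cast : ℕ → ℝ) (Nat.succ_mul_centralBinom_succ k)
  have hk1 : ((k:ℝ)+1) ≠ 0 := by positivity
  have h4 : (0:ℝ) < 4^k := by positivity
  have heq : aa (k+1) = aa k * (2*k+1)/(2*k+2) := by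
    unfold aa
    rw [pow_succ]
    field_simp
    linear_combination 2 * hC
  rw [heq]
  have hle : aa k * (2*k+1)/(2*k+2) ≤ aa k * 1 := by
    rw [div_le_iff₀ (by positivity)]
    have := (aa_pos k).le
    nlinarith
  simpa using hle
lemma aa_anti {m k : ℕ} (h : m ≤ k) : aa k ≤ aa m :=
  antitone_nat_of_succ_le aa_succ_le h

lemma aa_summable {x : ℝ} (hx0 : 0 ≤ x) (hx1 : x < 1) :
    Summable (fun k => aa k * x^k) := by
  refine Summable.of_nonneg_of_le (fun k => mul_nonneg (aa_pos k).le (pow_nonneg hx0 k))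
    (fun k => ?_) (summable_geometric_of_lt_one hx0 hx1)
  calc aa k * x^k ≤ 1 * x^k := by
        apply mul_le_mul_of_nonneg_right (aa_le_one k) (by positivity)
    _ = x^k := one_mul _

lemma aa_tsum_sqrt {x : ℝ} (hx0 : 0 ≤ x) (hx1 : x < 1) :
    (∑' k, aa k * x^k) * Real.sqrt (1-x) = 1 := by
  set T := ∑' k, aa k * x^k with hT
  have hsum := aa_summable hx0 hx1
  have hnorm : Summable (fun k => ‖aa k * x^k‖) := by
    have : ∀ k, ‖aa k * x^k‖ = aa k * x^k :=
      fun k => Real.norm_of_nonneg (mul_nonneg (aa_pos k).le (pow_nonneg hx0 k))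
    simpa [this] using hsum
  have hsq : T * T = (1-x)⁻¹ := by
    rw [hT, tsum_mul_tsum_eq_tsum_sum_antidiagonal_of_summable_norm hnorm hnorm]
    have : ∀ m : ℕ, ∑ ij ∈ Finset.HasAntidiagonal.antidiagonal m, (aa ij.1 * x^ij.1) * (aa ij.2 * x^ij.2)
        = x^m := by
      intro m
      have : ∀ ij ∈ Finset.HasAntidiagonal.antidiagonal m,
          (aa ij.1 * x^ij.1) * (aa ij.2 * x^ij.2) = (aa ij.1 * aa ij.2) * x^m := by
        intro ij hij
        have h := Finset.HasAntidiagonal.mem_antidiagonal.mp hij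
        rw [← h, pow_add]; ring
      rw [Finset.sum_congr rfl this, ← Finset.sum_mul]
      rw [show ∑ ij ∈ Finset.HasAntidiagonal.antidiagonal m, aa ij.1 * aa ij.2 = 1 from by
        simpa [aa] using conv_identity m, one_mul]
    simp_rw [this]
    exact tsum_geometric_of_lt_one hx0 hx1
  have hTnn : 0 ≤ T := tsum_nonneg (fun k => mul_nonneg (aa_pos k).le (pow_nonneg hx0 k))
  have hsnn : 0 ≤ Real.sqrt (1-x) := Real.sqrt_nonneg _
  have h1x : (0:ℝ) < 1 - x := by linarith
  have hsq2 : (T * Real.sqrt (1-x))^2 = 1 := by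
    have : Real.sqrt (1-x) ^ 2 = 1 - x := Real.sq_sqrt h1x.le
    rw [mul_pow, this, pow_two, hsq]
    field_simp
  have hfact : (T * Real.sqrt (1-x) - 1) * (T * Real.sqrt (1-x) + 1) = 0 := by nlinarith [hsq2]
  rcases mul_eq_zero.mp hfact with h | h
  · linarith
  · nlinarith [mul_nonneg hTnn hsnn]

lemma aa_hasSum {ω : ℝ} (hc : 0 < Real.cos ω) :
    HasSum (fun k => aa k * Real.sin ω ^ (2*k)) (1 / Real.cos ω) := by
  set x := Real.sin ω ^ 2 with hx
  have hx0 : 0 ≤ x := sq_nonneg _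
  have hcs : Real.sin ω ^2 + Real.cos ω ^2 = 1 := Real.sin_sq_add_cos_sq ω
  have hx1 : x < 1 := by nlinarith
  have heq : (fun k => aa k * Real.sin ω ^ (2*k)) = fun k => aa k * x^k := by
    funext k; rw [hx, ← pow_mul, mul_comm 2 k]
  have hsum := aa_summable hx0 hx1
  have hsqrt : Real.sqrt (1 - x) = Real.cos ω := by
    rw [show 1 - x = Real.cos ω ^2 by linarith]
    exact Real.sqrt_sq hc.le
  have hval : (∑' k, aa k * x^k) = 1 / Real.cos ω := by
    have h := aa_tsum_sqrt hx0 hx1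
    rw [hsqrt] at h
    field_simp at h ⊢
    linarith
  rw [heq, ← hval]
  exact hsum.hasSum

lemma modSymbol_eq (n : ℕ) (ω : ℝ) :
    modSymbol n ω = 1 - Real.cos ω * ∑ k ∈ Finset.range n, aa k * Real.sin ω ^ (2*k) := rfl

set_option maxHeartbeats 1000000 in
lemma modSymbol_bounds {ω : ℝ} (hc : 0 < Real.cos ω) (n : ℕ) :
    aa n * Real.cos ω * Real.sin ω ^ (2*n) ≤ modSymbol n ω ∧
      modSymbol n ω ≤ aa n * Real.sin ω ^ (2*n) / Real.cos ω := by
  set s := Real.sin ω with hs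
  set c := Real.cos ω with hcc
  have hcs : s^2 + c^2 = 1 := Real.sin_sq_add_cos_sq ω
  have hs1 : s^2 < 1 := by nlinarith
  have hs0 : (0:ℝ) ≤ s^2 := sq_nonneg _
  have hsum := (aa_hasSum hc).summable
  have hnn : ∀ k, 0 ≤ aa k * s ^ (2*k) := fun k => by
    have := aa_pos k
    have : (0:ℝ) ≤ s ^ (2*k) := by rw [mul_comm, pow_mul]; positivity
    nlinarith [aa_pos k]
  have htail_sum : Summable (fun i => aa (i+n) * s^(2*(i+n))) :=
    (summable_nat_add_iff n).mpr hsum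
  have hid : modSymbol n ω = c * ∑' i, aa (i+n) * s^(2*(i+n)) := by
    have h := Summable.sum_add_tsum_nat_add (f := fun k => aa k * s^(2*k)) n hsum
    rw [(aa_hasSum hc).tsum_eq] at h
    have hcne : c ≠ 0 := ne_of_gt hc
    have h2 : ∑ k ∈ Finset.range n, aa k * s^(2*k)
        = 1/c - ∑' i, aa (i+n) * s^(2*(i+n)) := by linarith
    rw [modSymbol_eq, h2, mul_sub, mul_one_div, div_self hcne]
    ring
  -- geometric comparison for the tail
  have hterm : ∀ i, aa (i+n) * s^(2*(i+n)) ≤ aa n * s^(2*n) * (s^2)^i := by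
    intro i
    have h1 : aa (i+n) ≤ aa n := aa_anti (by omega)
    have h2 : s^(2*(i+n)) = s^(2*n) * (s^2)^i := by
      rw [show 2*(i+n) = 2*n + 2*i by ring, pow_add, pow_mul s 2 i]
    rw [h2, ← mul_assoc]
    have h4 : (0:ℝ) ≤ s^(2*n) := by rw [mul_comm, pow_mul]; positivity
    have h3 : (0:ℝ) ≤ (s^2)^i := by positivity
    exact mul_le_mul_of_nonneg_right (mul_le_mul_of_nonneg_right h1 h4) h3
  have hgeo : Summable (fun i : ℕ => aa n * s^(2*n) * (s^2)^i) :=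
    (summable_geometric_of_lt_one hs0 hs1).mul_left _
  have hgeo_sum : ∑' i : ℕ, aa n * s^(2*n) * (s^2)^i = aa n * s^(2*n) * (1 - s^2)⁻¹ := by
    rw [tsum_mul_left, tsum_geometric_of_lt_one hs0 hs1]
  have htail_ub : ∑' i, aa (i+n) * s^(2*(i+n)) ≤ aa n * s^(2*n) * (1-s^2)⁻¹ := by
    rw [← hgeo_sum]
    exact Summable.tsum_le_tsum hterm htail_sum hgeo
  have htail_lb : aa n * s^(2*n) ≤ ∑' i, aa (i+n) * s^(2*(i+n)) := by
    have := Summable.le_tsum htail_sum 0 (fun j _ => hnn (j+n))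
    simpa using this
  constructor
  · rw [hid]
    calc aa n * c * s^(2*n) = c * (aa n * s^(2*n)) := by ring
      _ ≤ c * ∑' i, aa (i+n) * s^(2*(i+n)) := by
          exact mul_le_mul_of_nonneg_left htail_lb hc.le
  · rw [hid]
    have h1ms : 1 - s^2 = c^2 := by linarith
    calc c * ∑' i, aa (i+n) * s^(2*(i+n)) ≤ c * (aa n * s^(2*n) * (1-s^2)⁻¹) :=
          mul_le_mul_of_nonneg_left htail_ub hc.le
      _ = aa n * s^(2*n) / c := by
          rw [h1ms]; field_simp

lemma even_pow_pos {ω : ℝ} (hω : ω ≠ 0) (n : ℕ) : 0 < ω^(2*n) := by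
  rw [mul_comm, pow_mul]
  positivity

lemma even_pow_nonneg (ω : ℝ) (n : ℕ) : 0 ≤ ω^(2*n) := by
  rw [mul_comm, pow_mul]; positivity

lemma sin_div_tendsto : Tendsto (fun ω : ℝ => Real.sin ω / ω) (𝓝[≠] 0) (𝓝 1) := by
  have h : HasDerivAt Real.sin 1 0 := by simpa using Real.hasDerivAt_sin 0
  have := hasDerivAt_iff_tendsto_slope.mp h
  have heq : slope Real.sin 0 = fun ω => Real.sin ω / ω := by
    funext ω; rw [slope_def_field]; simp
  rwa [heq] at this

lemma modSymbol_div_tendsto (n : ℕ) :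
    Tendsto (fun ω => modSymbol n ω / (aa n * ω^(2*n))) (𝓝[≠] (0:ℝ)) (𝓝 1) := by
  have hq : Tendsto (fun ω : ℝ => (Real.sin ω / ω)^(2*n)) (𝓝[≠] 0) (𝓝 1) := by
    simpa using sin_div_tendsto.pow (2*n)
  have hcos : Tendsto (fun ω : ℝ => Real.cos ω) (𝓝[≠] 0) (𝓝 1) := by
    have := (Real.continuous_cos.tendsto 0).mono_left (nhdsWithin_le_nhds (s := {(0:ℝ)}ᶜ))
    simpa using this
  have hL : Tendsto (fun ω : ℝ => Real.cos ω * (Real.sin ω / ω)^(2*n)) (𝓝[≠] 0) (𝓝 1) := by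
    simpa using hcos.mul hq
  have hU : Tendsto (fun ω : ℝ => (Real.sin ω / ω)^(2*n) / Real.cos ω) (𝓝[≠] 0) (𝓝 1) := by
    have h := (hq.div hcos one_ne_zero : Tendsto (fun ω : ℝ => (Real.sin ω / ω)^(2*n) / Real.cos ω) (𝓝[≠] 0) (𝓝 (1/1)))
    rwa [div_one] at h
  have hmem : Set.Ioo (-(π/2)) (π/2) ∩ {(0:ℝ)}ᶜ ∈ 𝓝[≠] (0:ℝ) :=
    inter_mem (nhdsWithin_le_nhds (Ioo_mem_nhds (by linarith [Real.pi_div_two_pos])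
      Real.pi_div_two_pos))
      self_mem_nhdsWithin
  have hbound : ∀ ω ∈ Set.Ioo (-(π/2)) (π/2) ∩ {(0:ℝ)}ᶜ,
      Real.cos ω * (Real.sin ω / ω)^(2*n) ≤ modSymbol n ω / (aa n * ω^(2*n)) ∧
      modSymbol n ω / (aa n * ω^(2*n)) ≤ (Real.sin ω / ω)^(2*n) / Real.cos ω := by
    intro ω ⟨hio, hne⟩
    have hω : ω ≠ 0 := hne
    have hc : 0 < Real.cos ω := Real.cos_pos_of_mem_Ioo hio
    have hpow : 0 < ω^(2*n) := even_pow_pos hω n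
    have han := aa_pos n
    obtain ⟨hlb, hub⟩ := modSymbol_bounds hc n
    have hdiv : (Real.sin ω / ω)^(2*n) = Real.sin ω^(2*n) / ω^(2*n) := div_pow _ _ _
    constructor
    · rw [hdiv, le_div_iff₀ (by positivity : (0:ℝ) < aa n * ω^(2*n))]
      have heq : Real.cos ω * (Real.sin ω^(2*n) / ω^(2*n)) * (aa n * ω^(2*n))
          = aa n * Real.cos ω * Real.sin ω^(2*n) := by
        field_simp
      rw [heq]
      exact hlb
    · rw [hdiv, div_le_div_iff₀ (by positivity : (0:ℝ) < aa n * ω^(2*n)) hc]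
      have heq : Real.sin ω^(2*n) / ω^(2*n) * (aa n * ω^(2*n)) = aa n * Real.sin ω^(2*n) := by
        field_simp
      rw [heq]
      exact (le_div_iff₀ hc).mp hub
  refine tendsto_of_tendsto_of_tendsto_of_le_of_le' hL hU ?_ ?_
  · exact eventually_of_mem hmem (fun ω h => (hbound ω h).1)
  · exact eventually_of_mem hmem (fun ω h => (hbound ω h).2)

lemma modSymbol_zero {n : ℕ} (hn : 1 ≤ n) : modSymbol n 0 = 0 := by
  rw [modSymbol_eq]
  rw [Finset.sum_eq_single 0 (fun k _ hk => by
      rw [Real.sin_zero, zero_pow (by omega : 2*k ≠ 0), mul_zero])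
    (fun h => absurd (Finset.mem_range.mpr hn) h)]
  simp [aa]

lemma modSymbol_pos {n : ℕ} (hn : 1 ≤ n) {ω : ℝ} (hω : ω ≠ 0) (h1 : -π ≤ ω) (h2 : ω ≤ π) :
    0 < modSymbol n ω := by
  by_cases hc : 0 < Real.cos ω
  · have habs : |ω| < π/2 := by
      by_contra h
      push_neg at h
      have : Real.cos |ω| ≤ 0 :=
        Real.cos_nonpos_of_pi_div_two_le_of_le h
          (by rw [abs_le]; constructor <;> nlinarith [Real.pi_pos])
      rw [Real.cos_abs] at this
      linarith
    obtain ⟨ha1, ha2⟩ := abs_lt.mp habs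
    have hs : Real.sin ω ≠ 0 := fun h => hω
      ((Real.sin_eq_zero_iff_of_lt_of_lt (by linarith [Real.pi_pos])
        (by linarith [Real.pi_pos])).mp h)
    have hb := (modSymbol_bounds hc n).1
    have h1 : 0 < Real.sin ω ^ (2*n) := even_pow_pos hs n
    exact lt_of_lt_of_le (mul_pos (mul_pos (aa_pos n) hc) h1) hb
  · push_neg at hc
    have hS : 0 ≤ ∑ k ∈ Finset.range n, aa k * Real.sin ω ^ (2*k) :=
      Finset.sum_nonneg fun k _ => mul_nonneg (aa_pos k).le (even_pow_nonneg _ _)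
    have := mul_nonneg (neg_nonneg.mpr hc) hS
    rw [modSymbol_eq]
    nlinarith

lemma modSymbol_alpha {n : ℕ} (hn : 1 ≤ n) :
    ∃ α > (0 : ℝ), ∀ ω ∈ Set.Ioo (-Real.pi) Real.pi,
      α * ω ^ (2 * n) ≤ modSymbol n ω ∧ modSymbol n ω ≤ α⁻¹ * ω ^ (2 * n) := by
  set g : ℝ → ℝ := fun ω => if ω = 0 then aa n else modSymbol n ω / ω^(2*n) with hg
  have hmodc : Continuous (modSymbol n) := by
    unfold modSymbol
    exact continuous_const.sub (Real.continuous_cos.mul (continuous_finset_sum _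
      fun k _ => continuous_const.mul (Real.continuous_sin.pow _)))
  have hgc : Continuous g := by
    rw [continuous_iff_continuousAt]
    intro x
    by_cases hx : x = 0
    · subst hx
      rw [ContinuousAt]
      have hg0 : g 0 = aa n := if_pos rfl
      rw [hg0, ← nhdsNE_sup_pure (0:ℝ), tendsto_sup]
      constructor
      · have h1 : Tendsto (fun ω => aa n * (modSymbol n ω / (aa n * ω^(2*n))))
            (𝓝[≠] (0:ℝ)) (𝓝 (aa n)) := by
          simpa using (modSymbol_div_tendsto n).const_mul (aa n)
        refine h1.congr' ?_
        filter_upwards [self_mem_nhdsWithin] with ω hω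
        have hω0 : ω ≠ 0 := hω
        show aa n * (modSymbol n ω / (aa n * ω ^ (2 * n))) = g ω
        have hgv : g ω = modSymbol n ω / ω^(2*n) := if_neg hω0
        rw [hgv, mul_div_assoc', mul_div_mul_left _ _ (ne_of_gt (aa_pos n))]
      · have := tendsto_pure_nhds g 0
        rwa [hg0] at this
    · have hev : g =ᶠ[𝓝 x] fun ω => modSymbol n ω / ω^(2*n) := by
        filter_upwards [isOpen_compl_singleton.mem_nhds (by simpa using hx :
          x ∈ ({(0:ℝ)}ᶜ : Set ℝ))] with ω hω
        exact if_neg hω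
      refine ContinuousAt.congr ?_ hev.symm
      exact (hmodc.continuousAt).div (continuous_pow _).continuousAt
        (pow_ne_zero _ hx)
  have hIcc : IsCompact (Set.Icc (-π) π) := isCompact_Icc
  have hne : (Set.Icc (-π) π).Nonempty := ⟨0, by constructor <;> [linarith [Real.pi_pos]; linarith [Real.pi_pos]]⟩
  obtain ⟨xm, hxm, hmin⟩ := hIcc.exists_isMinOn hne hgc.continuousOn
  obtain ⟨xM, hxM, hmax⟩ := hIcc.exists_isMaxOn hne hgc.continuousOn
  have hgpos : ∀ x ∈ Set.Icc (-π) π, 0 < g x := by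
    intro x hx
    by_cases hx0 : x = 0
    · rw [hx0, hg]; simpa using aa_pos n
    · rw [hg]
      simp only [if_neg hx0]
      exact div_pos (modSymbol_pos hn hx0 hx.1 hx.2) (even_pow_pos hx0 n)
  have hm : 0 < g xm := hgpos xm hxm
  have hM : 0 < g xM := lt_of_lt_of_le hm (hmin hxM)
  refine ⟨min (g xm) (g xM)⁻¹, lt_min hm (inv_pos.mpr hM), ?_⟩
  intro ω hω
  have hωIcc : ω ∈ Set.Icc (-π) π := ⟨hω.1.le, hω.2.le⟩
  by_cases hω0 : ω = 0
  · subst hω0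
    rw [modSymbol_zero hn, zero_pow (by omega : 2*n ≠ 0), mul_zero, mul_zero]
    exact ⟨le_refl _, le_refl _⟩
  · have hpow : 0 < ω^(2*n) := even_pow_pos hω0 n
    have hgval : g ω = modSymbol n ω / ω^(2*n) := if_neg hω0
    have hlo : g xm ≤ g ω := hmin hωIcc
    have hhi : g ω ≤ g xM := hmax hωIcc
    have hfeq : modSymbol n ω = g ω * ω^(2*n) := by
      rw [hgval, div_mul_cancel₀ _ (ne_of_gt hpow)]
    constructor
    · rw [hfeq]
      exact mul_le_mul_of_nonneg_right (le_trans (min_le_left _ _) hlo) hpow.le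
    · rw [hfeq]
      refine mul_le_mul_of_nonneg_right ?_ hpow.le
      calc g ω ≤ g xM := hhi
        _ = ((g xM)⁻¹)⁻¹ := (inv_inv _).symm
        _ ≤ (min (g xm) (g xM)⁻¹)⁻¹ :=
            inv_anti₀ (lt_min hm (inv_pos.mpr hM)) (min_le_right _ _)


lemma modSymbol_pi_div_two (n : ℕ) : modSymbol n (Real.pi / 2) = 1 := by
  rw [modSymbol_eq, Real.cos_pi_div_two, zero_mul, sub_zero]

lemma cos_sub_pi_div_two' (y : ℝ) : Real.cos (y - Real.pi/2) = Real.sin y := by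
  rw [← Real.cos_neg, neg_sub, Real.cos_pi_div_two_sub]

lemma sin_sub_pi_div_two' (y : ℝ) : Real.sin (y - Real.pi/2) = -Real.cos y := by
  rw [← neg_sub, Real.sin_neg, Real.sin_pi_div_two_sub]

end Aux

/-- Properties of the modified-energy symbol `f_n`, `n ≥ 1`: (i) `f_n` is even,
`f_n(π/2) = 1` and `x ↦ f_n(x - π/2) - f_n(π/2)` is odd; (ii)
`f_n(ω) ~ (C(2n,n)/4^n) ω^{2n}` as `ω → 0`; (iii) there is `α > 0` with
`α ω^{2n} ≤ f_n(ω) ≤ α⁻¹ ω^{2n}` on `(-π, π)`. -/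
theorem modSymbol_properties (n : ℕ) (hn : 1 ≤ n) :
    (∀ ω : ℝ, modSymbol n (-ω) = modSymbol n ω) ∧
    modSymbol n (Real.pi / 2) = 1 ∧
    (∀ x : ℝ, modSymbol n (-x - Real.pi / 2) - modSymbol n (Real.pi / 2)
        = -(modSymbol n (x - Real.pi / 2) - modSymbol n (Real.pi / 2))) ∧
    Asymptotics.IsEquivalent (𝓝[≠] (0 : ℝ)) (modSymbol n)
      (fun ω => ((Nat.choose (2 * n) n : ℝ) / 4 ^ n) * ω ^ (2 * n)) ∧
    ∃ α > (0 : ℝ), ∀ ω ∈ Set.Ioo (-Real.pi) Real.pi,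
      α * ω ^ (2 * n) ≤ modSymbol n ω ∧ modSymbol n ω ≤ α⁻¹ * ω ^ (2 * n) := by
  refine ⟨?_, modSymbol_pi_div_two n, ?_, ?_, modSymbol_alpha hn⟩
  · intro ω
    rw [modSymbol_eq, modSymbol_eq, Real.cos_neg, Real.sin_neg]
    congr 1
    congr 1
    exact Finset.sum_congr rfl fun k _ => by rw [(even_two_mul k).neg_pow]
  · intro x
    rw [modSymbol_pi_div_two]
    rw [modSymbol_eq, modSymbol_eq, cos_sub_pi_div_two', cos_sub_pi_div_two',
      sin_sub_pi_div_two', sin_sub_pi_div_two', Real.sin_neg, Real.cos_neg]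
    ring
  · have hv : ∀ᶠ ω in 𝓝[≠] (0:ℝ),
        ((Nat.choose (2 * n) n : ℝ) / 4 ^ n) * ω ^ (2 * n) ≠ 0 := by
      filter_upwards [self_mem_nhdsWithin] with ω hω
      exact (mul_pos (aa_pos n) (even_pow_pos hω n)).ne'
    rw [Asymptotics.isEquivalent_iff_tendsto_one hv]
    exact modSymbol_div_tendsto n
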